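/- For all σ > 0, τ > 0 and x, k ∈ ℝ, the Black–Scholes call price admits the representation u^{BS}(σ;τ,x,k) = (eˣ − e^k)⁺ + eˣ √(τ/(2π)) ∫₀^σ exp(−(1/2)·((x−k)/(w√τ) + w√τ/2)²) dw. -/

import Mathlib

noncomputable def Gauss (t x : ℝ) : ℝ :=
  (Real.sqrt (2 * Real.pi * t))⁻¹ * Real.exp (-x ^ 2 / (2 * t))

/-- Standard normal cumulative distribution function. -/
noncomputable def normalCDF (x : ℝ) : ℝ :=
  (Real.sqrt (2 * Real.pi))⁻¹ * ∫ s in Set.Iic x, Real.exp (-s ^ 2 / 2)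

/-- Black–Scholes call price `u^{BS}(σ; τ, x, k)` in log variables. -/
noncomputable def uBS (σ τ x k : ℝ) : ℝ :=
  Real.exp x * normalCDF ((x - k + σ ^ 2 * τ / 2) / (σ * Real.sqrt τ)) -
    Real.exp k * normalCDF ((x - k - σ ^ 2 * τ / 2) / (σ * Real.sqrt τ))

open MeasureTheory Real Filter Set intervalIntegral

lemma gauss_integrable : Integrable (fun s : ℝ => Real.exp (-s ^ 2 / 2)) := by
  have := integrable_exp_neg_mul_sq (by norm_num : (0:ℝ) < 1/2)
  convert this using 2 with s
  ring_nf

lemma gauss_total : (∫ s : ℝ, Real.exp (-s ^ 2 / 2)) = Real.sqrt (2 * Real.pi) := by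
  have h := integral_gaussian (1/2 : ℝ)
  have h2 : (∫ s : ℝ, Real.exp (-s ^ 2 / 2)) = ∫ s : ℝ, Real.exp (-(1/2) * s ^ 2) := by
    congr 1; ext s; congr 1; ring
  rw [h2, h, show Real.pi / (1/2) = 2 * Real.pi by ring]

lemma normalCDF_eq (y : ℝ) : normalCDF y =
    (Real.sqrt (2 * Real.pi))⁻¹ *
      ((∫ s in Set.Iic (0:ℝ), Real.exp (-s ^ 2 / 2)) +
        ∫ s in (0:ℝ)..y, Real.exp (-s ^ 2 / 2)) := by
  unfold normalCDF
  rw [← intervalIntegral.integral_Iic_sub_Iic gauss_integrable.integrableOn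
    gauss_integrable.integrableOn]
  ring

lemma hasDerivAt_normalCDF (x : ℝ) :
    HasDerivAt normalCDF ((Real.sqrt (2 * Real.pi))⁻¹ * Real.exp (-x ^ 2 / 2)) x := by
  have h : HasDerivAt (fun y => ∫ s in (0:ℝ)..y, Real.exp (-s ^ 2 / 2))
      (Real.exp (-x ^ 2 / 2)) x :=
    intervalIntegral.integral_hasDerivAt_right gauss_integrable.intervalIntegrable
      (Continuous.stronglyMeasurableAtFilter (by continuity) _ _)
      (by fun_prop)
  have := ((h.const_add (∫ s in Set.Iic (0:ℝ), Real.exp (-s ^ 2 / 2))).const_mul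
      ((Real.sqrt (2 * Real.pi))⁻¹))
  exact this.congr_of_eventuallyEq (Filter.Eventually.of_forall fun y => (normalCDF_eq y))

lemma continuous_normalCDF : Continuous normalCDF := by
  have : Differentiable ℝ normalCDF := fun x => (hasDerivAt_normalCDF x).differentiableAt
  exact this.continuous

lemma tendsto_normalCDF_atTop : Tendsto normalCDF atTop (nhds 1) := by
  have h : Tendsto (fun y : ℝ => ∫ s in Set.Iic y, Real.exp (-s ^ 2 / 2)) atTop
      (nhds (∫ s : ℝ, Real.exp (-s ^ 2 / 2))) := by
    exact (MeasureTheory.aecover_Iic tendsto_id).integral_tendsto_of_countably_generated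
      gauss_integrable
  have := h.const_mul ((Real.sqrt (2 * Real.pi))⁻¹)
  rw [gauss_total] at this
  have hne : Real.sqrt (2 * Real.pi) ≠ 0 := by positivity
  rw [show (1:ℝ) = (Real.sqrt (2 * Real.pi))⁻¹ * Real.sqrt (2 * Real.pi) from
    (inv_mul_cancel₀ hne).symm]
  exact this

lemma tendsto_normalCDF_atBot : Tendsto normalCDF atBot (nhds 0) := by
  have hIoi : Tendsto (fun y : ℝ => ∫ s in Set.Ioi y, Real.exp (-s ^ 2 / 2)) atBot
      (nhds (∫ s : ℝ, Real.exp (-s ^ 2 / 2))) :=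
    (MeasureTheory.aecover_Ioi tendsto_id).integral_tendsto_of_countably_generated
      gauss_integrable
  have hsplit : ∀ y : ℝ, (∫ s in Set.Iic y, Real.exp (-s ^ 2 / 2)) =
      (∫ s : ℝ, Real.exp (-s ^ 2 / 2)) - ∫ s in Set.Ioi y, Real.exp (-s ^ 2 / 2) := by
    intro y
    rw [← intervalIntegral.integral_Iic_add_Ioi (b := y) gauss_integrable.integrableOn
      gauss_integrable.integrableOn]
    ring
  have h : Tendsto (fun y : ℝ => ∫ s in Set.Iic y, Real.exp (-s ^ 2 / 2)) atBot (nhds 0) := by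
    simp only [hsplit]
    have := (tendsto_const_nhds (x := (∫ s : ℝ, Real.exp (-s ^ 2 / 2)))
      (f := atBot (α := ℝ))).sub hIoi
    rwa [sub_self] at this
  have h2 := h.const_mul ((Real.sqrt (2 * Real.pi))⁻¹)
  rw [mul_zero] at h2
  exact h2


section
variable {τ x k : ℝ}

lemma uBS_eq (hτ : 0 < τ) {w : ℝ} (hw : w ≠ 0) :
    uBS w τ x k =
      Real.exp x * normalCDF ((x - k) / Real.sqrt τ * w⁻¹ + w * (Real.sqrt τ / 2)) -
        Real.exp k * normalCDF ((x - k) / Real.sqrt τ * w⁻¹ - w * (Real.sqrt τ / 2)) := by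
  have hs : Real.sqrt τ ≠ 0 := by positivity
  have ht : Real.sqrt τ * Real.sqrt τ = τ := Real.mul_self_sqrt hτ.le
  unfold uBS
  have e1 : (x - k + w ^ 2 * τ / 2) / (w * Real.sqrt τ) =
      (x - k) / Real.sqrt τ * w⁻¹ + w * (Real.sqrt τ / 2) := by
    field_simp
    linear_combination (-w ^ 2) * ht
  have e2 : (x - k - w ^ 2 * τ / 2) / (w * Real.sqrt τ) =
      (x - k) / Real.sqrt τ * w⁻¹ - w * (Real.sqrt τ / 2) := by
    field_simp
    linear_combination (w ^ 2) * ht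
  rw [e1, e2]

lemma key_identity (hτ : 0 < τ) {w : ℝ} (hw : w ≠ 0) :
    Real.exp k * Real.exp (-((x - k) / Real.sqrt τ * w⁻¹ - w * (Real.sqrt τ / 2)) ^ 2 / 2) =
      Real.exp x * Real.exp (-((x - k) / Real.sqrt τ * w⁻¹ + w * (Real.sqrt τ / 2)) ^ 2 / 2) := by
  have hs : Real.sqrt τ ≠ 0 := by positivity
  have ht : Real.sqrt τ * Real.sqrt τ = τ := Real.mul_self_sqrt hτ.le
  rw [← Real.exp_add, ← Real.exp_add]
  congr 1
  have : (x - k) / Real.sqrt τ * w⁻¹ * (w * (Real.sqrt τ / 2)) = (x - k) / 2 := by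
    field_simp
  linear_combination 2 * this

lemma hasDerivAt_uBS (hτ : 0 < τ) {w : ℝ} (hw : 0 < w) :
    HasDerivAt (fun w => uBS w τ x k)
      (Real.exp x * Real.sqrt (τ / (2 * Real.pi)) *
        Real.exp (-(1 / 2) * ((x - k) / (w * Real.sqrt τ) + w * Real.sqrt τ / 2) ^ 2)) w := by
  have hs : (0:ℝ) < Real.sqrt τ := Real.sqrt_pos.mpr hτ
  set c := (x - k) / Real.sqrt τ with hc
  have hdp : HasDerivAt (fun w : ℝ => c * w⁻¹ + w * (Real.sqrt τ / 2))
      (c * (-(w ^ 2)⁻¹) + Real.sqrt τ / 2) w :=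
    (((hasDerivAt_inv hw.ne').const_mul c).add
      ((hasDerivAt_id w).mul_const (Real.sqrt τ / 2))).congr_deriv (by ring)
  have hdm : HasDerivAt (fun w : ℝ => c * w⁻¹ - w * (Real.sqrt τ / 2))
      (c * (-(w ^ 2)⁻¹) - Real.sqrt τ / 2) w :=
    (((hasDerivAt_inv hw.ne').const_mul c).sub
      ((hasDerivAt_id w).mul_const (Real.sqrt τ / 2))).congr_deriv (by ring)
  have hNp := (hasDerivAt_normalCDF (c * w⁻¹ + w * (Real.sqrt τ / 2))).comp w hdp
  have hNm := (hasDerivAt_normalCDF (c * w⁻¹ - w * (Real.sqrt τ / 2))).comp w hdm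
  have hF : HasDerivAt (fun w : ℝ =>
      Real.exp x * normalCDF (c * w⁻¹ + w * (Real.sqrt τ / 2)) -
        Real.exp k * normalCDF (c * w⁻¹ - w * (Real.sqrt τ / 2)))
      (Real.exp x * ((Real.sqrt (2 * Real.pi))⁻¹ *
          Real.exp (-(c * w⁻¹ + w * (Real.sqrt τ / 2)) ^ 2 / 2) *
          (c * (-(w ^ 2)⁻¹) + Real.sqrt τ / 2)) -
        Real.exp k * ((Real.sqrt (2 * Real.pi))⁻¹ *
          Real.exp (-(c * w⁻¹ - w * (Real.sqrt τ / 2)) ^ 2 / 2) *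
          (c * (-(w ^ 2)⁻¹) - Real.sqrt τ / 2))) w :=
    (hNp.const_mul (Real.exp x)).sub (hNm.const_mul (Real.exp k))
  have heq : (fun w : ℝ =>
      Real.exp x * normalCDF (c * w⁻¹ + w * (Real.sqrt τ / 2)) -
        Real.exp k * normalCDF (c * w⁻¹ - w * (Real.sqrt τ / 2))) =ᶠ[nhds w]
      (fun w => uBS w τ x k) := by
    filter_upwards [eventually_ne_nhds hw.ne'] with v hv
    exact (uBS_eq hτ hv).symm
  refine (hF.congr_of_eventuallyEq heq.symm).congr_deriv ?_
  have hid := key_identity (τ := τ) (x := x) (k := k) hτ hw.ne'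
  rw [← hc] at hid
  have e1 : Real.exp k * ((Real.sqrt (2 * Real.pi))⁻¹ *
      Real.exp (-(c * w⁻¹ - w * (Real.sqrt τ / 2)) ^ 2 / 2) *
      (c * (-(w ^ 2)⁻¹) - Real.sqrt τ / 2)) =
      Real.exp x * ((Real.sqrt (2 * Real.pi))⁻¹ *
      Real.exp (-(c * w⁻¹ + w * (Real.sqrt τ / 2)) ^ 2 / 2) *
      (c * (-(w ^ 2)⁻¹) - Real.sqrt τ / 2)) := by
    linear_combination ((Real.sqrt (2 * Real.pi))⁻¹ * (c * (-(w ^ 2)⁻¹) - Real.sqrt τ / 2)) * hid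
  rw [e1]
  have harg : (x - k) / (w * Real.sqrt τ) + w * Real.sqrt τ / 2 =
      c * w⁻¹ + w * (Real.sqrt τ / 2) := by
    rw [hc]; field_simp
  rw [harg]
  have hsq : Real.sqrt (τ / (2 * Real.pi)) = Real.sqrt τ * (Real.sqrt (2 * Real.pi))⁻¹ := by
    rw [Real.sqrt_div hτ.le, div_eq_mul_inv]
  rw [hsq]
  have : -(1/2) * (c * w⁻¹ + w * (Real.sqrt τ / 2)) ^ 2 =
      -(c * w⁻¹ + w * (Real.sqrt τ / 2)) ^ 2 / 2 := by ring
  rw [this]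
  ring
end


section
variable {τ x k : ℝ}

lemma tendsto_dpm (hτ : 0 < τ) (s : ℝ) (hxk : 0 < x - k) :
    Tendsto (fun ε : ℝ => (x - k) / Real.sqrt τ * ε⁻¹ + ε * s) (nhdsWithin 0 (Set.Ioi 0))
      atTop := by
  have hc : 0 < (x - k) / Real.sqrt τ := div_pos hxk (Real.sqrt_pos.mpr hτ)
  have h1 : Tendsto (fun ε : ℝ => (x - k) / Real.sqrt τ * ε⁻¹) (nhdsWithin 0 (Set.Ioi 0))
      atTop := tendsto_inv_nhdsGT_zero.const_mul_atTop hc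
  have h2 : Tendsto (fun ε : ℝ => ε * s) (nhdsWithin 0 (Set.Ioi 0)) (nhds 0) := by
    have := ((continuous_id.mul continuous_const : Continuous fun ε : ℝ => ε * s).tendsto 0).mono_left
      (nhdsWithin_le_nhds (s := Set.Ioi (0:ℝ)))
    simpa [Pi.mul_def] using this
  exact tendsto_atTop_add_right_of_le' _ (-1) h1 <| by
    filter_upwards [h2.eventually (eventually_gt_nhds (by norm_num : (-1:ℝ) < 0))] with ε hε
    exact le_of_lt hε

lemma tendsto_dpm_bot (hτ : 0 < τ) (s : ℝ) (hxk : x - k < 0) :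
    Tendsto (fun ε : ℝ => (x - k) / Real.sqrt τ * ε⁻¹ + ε * s) (nhdsWithin 0 (Set.Ioi 0))
      atBot := by
  have hc : (x - k) / Real.sqrt τ < 0 := div_neg_of_neg_of_pos hxk (Real.sqrt_pos.mpr hτ)
  have h1 : Tendsto (fun ε : ℝ => (x - k) / Real.sqrt τ * ε⁻¹) (nhdsWithin 0 (Set.Ioi 0))
      atBot := tendsto_inv_nhdsGT_zero.const_mul_atTop_of_neg hc
  have h2 : Tendsto (fun ε : ℝ => ε * s) (nhdsWithin 0 (Set.Ioi 0)) (nhds 0) := by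
    have := ((continuous_id.mul continuous_const : Continuous fun ε : ℝ => ε * s).tendsto 0).mono_left
      (nhdsWithin_le_nhds (s := Set.Ioi (0:ℝ)))
    simpa [Pi.mul_def] using this
  exact tendsto_atBot_add_right_of_ge' _ 1 h1 <| by
    filter_upwards [h2.eventually (eventually_lt_nhds (by norm_num : (0:ℝ) < 1))] with ε hε
    exact le_of_lt hε

lemma tendsto_uBS_zero (hτ : 0 < τ) :
    Tendsto (fun ε => uBS ε τ x k) (nhdsWithin 0 (Set.Ioi 0))
      (nhds (max (Real.exp x - Real.exp k) 0)) := by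
  have heq : (fun ε : ℝ =>
      Real.exp x * normalCDF ((x - k) / Real.sqrt τ * ε⁻¹ + ε * (Real.sqrt τ / 2)) -
        Real.exp k * normalCDF ((x - k) / Real.sqrt τ * ε⁻¹ - ε * (Real.sqrt τ / 2)))
      =ᶠ[nhdsWithin 0 (Set.Ioi 0)] (fun ε => uBS ε τ x k) := by
    filter_upwards [self_mem_nhdsWithin] with ε (hε : (0:ℝ) < ε)
    exact (uBS_eq hτ hε.ne').symm
  refine Tendsto.congr' heq ?_
  rcases lt_trichotomy x k with hlt | heq2 | hgt
  · -- x < k : both args → -∞, limit 0 = max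
    have hp := tendsto_dpm_bot (x := x) (k := k) hτ (Real.sqrt τ / 2) (by linarith)
    have hm := tendsto_dpm_bot (x := x) (k := k) hτ (-(Real.sqrt τ / 2)) (by linarith)
    have hm' : Tendsto (fun ε : ℝ => (x - k) / Real.sqrt τ * ε⁻¹ - ε * (Real.sqrt τ / 2))
        (nhdsWithin 0 (Set.Ioi 0)) atBot := by
      simpa [mul_neg, sub_eq_add_neg] using hm
    have h1 := tendsto_normalCDF_atBot.comp hp
    have h2 := tendsto_normalCDF_atBot.comp hm'
    have := ((h1.const_mul (Real.exp x)).sub (h2.const_mul (Real.exp k)))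
    rw [mul_zero, mul_zero, sub_zero] at this
    rw [max_eq_right (by simp [Real.exp_le_exp, hlt.le])]
    exact this
  · -- x = k
    subst heq2
    have h0 : Tendsto (fun ε : ℝ => (x - x) / Real.sqrt τ * ε⁻¹ + ε * (Real.sqrt τ / 2))
        (nhdsWithin 0 (Set.Ioi 0)) (nhds 0) := by
      simp only [sub_self, zero_div, zero_mul, zero_add]
      have := ((continuous_id.mul continuous_const : Continuous fun ε : ℝ => ε * (Real.sqrt τ / 2)).tendsto 0).mono_left
        (nhdsWithin_le_nhds (s := Set.Ioi (0:ℝ)))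
      simpa [Pi.mul_def] using this
    have h0' : Tendsto (fun ε : ℝ => (x - x) / Real.sqrt τ * ε⁻¹ - ε * (Real.sqrt τ / 2))
        (nhdsWithin 0 (Set.Ioi 0)) (nhds 0) := by
      simp only [sub_self, zero_div, zero_mul, zero_sub]
      have := ((continuous_id.mul continuous_const : Continuous fun ε : ℝ => ε * (Real.sqrt τ / 2)).neg.tendsto 0).mono_left
        (nhdsWithin_le_nhds (s := Set.Ioi (0:ℝ)))
      simpa [Pi.mul_def, Pi.neg_def] using this
    have h1 := (continuous_normalCDF.tendsto 0).comp h0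
    have h2 := (continuous_normalCDF.tendsto 0).comp h0'
    have := ((h1.const_mul (Real.exp x)).sub (h2.const_mul (Real.exp x)))
    rw [sub_self] at this
    simpa using this
  · -- x > k
    have hp := tendsto_dpm (x := x) (k := k) hτ (Real.sqrt τ / 2) (by linarith)
    have hm := tendsto_dpm (x := x) (k := k) hτ (-(Real.sqrt τ / 2)) (by linarith)
    have hm' : Tendsto (fun ε : ℝ => (x - k) / Real.sqrt τ * ε⁻¹ - ε * (Real.sqrt τ / 2))
        (nhdsWithin 0 (Set.Ioi 0)) atTop := by
      simpa [mul_neg, sub_eq_add_neg] using hm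
    have h1 := tendsto_normalCDF_atTop.comp hp
    have h2 := tendsto_normalCDF_atTop.comp hm'
    have := ((h1.const_mul (Real.exp x)).sub (h2.const_mul (Real.exp k)))
    rw [mul_one, mul_one] at this
    rw [max_eq_left (by simp [Real.exp_le_exp, hgt.le] : (0:ℝ) ≤ Real.exp x - Real.exp k)]
    exact this
end

theorem stmt_3 (σ τ x k : ℝ) (hσ : 0 < σ) (hτ : 0 < τ) :
    uBS σ τ x k =
      max (Real.exp x - Real.exp k) 0 +
        Real.exp x * Real.sqrt (τ / (2 * Real.pi)) *
          ∫ w in (0:ℝ)..σ,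
            Real.exp (-(1 / 2) * ((x - k) / (w * Real.sqrt τ) + w * Real.sqrt τ / 2) ^ 2) := by
  set G : ℝ → ℝ := fun w =>
    Real.exp (-(1 / 2) * ((x - k) / (w * Real.sqrt τ) + w * Real.sqrt τ / 2) ^ 2) with hG
  set C : ℝ := Real.exp x * Real.sqrt (τ / (2 * Real.pi)) with hC
  -- integrability of G on any interval
  have hGmeas : Measurable G := by
    apply Real.measurable_exp.comp
    apply Measurable.mul measurable_const
    apply Measurable.pow_const
    exact (measurable_const.div ((measurable_id.mul_const _))).add
      ((measurable_id.mul_const _).div_const 2)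
  have hGbd : ∀ w, ‖G w‖ ≤ 1 := by
    intro w
    rw [hG, Real.norm_eq_abs, abs_of_pos (Real.exp_pos _)]
    exact Real.exp_le_one_iff.mpr (by nlinarith [sq_nonneg ((x - k) / (w * Real.sqrt τ) + w * Real.sqrt τ / 2)])
  have hGint : ∀ a b : ℝ, IntervalIntegrable G volume a b := by
    intro a b
    rw [intervalIntegrable_iff]
    have hone : IntegrableOn (fun _ : ℝ => (1:ℝ)) (Set.uIoc a b) volume :=
      (integrableOn_const_iff (hC := by simp)).mpr (Or.inr (by rw [Set.uIoc]; exact measure_Ioc_lt_top))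
    exact hone.mono' hGmeas.aestronglyMeasurable.restrict
      (Filter.Eventually.of_forall hGbd)
  -- FTC on [ε, σ]
  have hFTC : ∀ ε ∈ Set.Ioo (0:ℝ) σ, uBS ε τ x k + ∫ w in ε..σ, C * G w = uBS σ τ x k := by
    intro ε hε
    have key : ∫ w in ε..σ, C * G w = uBS σ τ x k - uBS ε τ x k := by
      apply intervalIntegral.integral_eq_sub_of_hasDerivAt
      · intro w hw
        rw [Set.uIcc_of_le hε.2.le] at hw
        exact hasDerivAt_uBS hτ (lt_of_lt_of_le hε.1 hw.1)
      · exact (hGint ε σ).const_mul C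
    rw [key]; ring
  -- ∫ ε..σ → ∫ 0..σ
  have hsmall : Tendsto (fun ε : ℝ => ∫ w in (0:ℝ)..ε, C * G w)
      (nhdsWithin 0 (Set.Ioi 0)) (nhds 0) := by
    apply squeeze_zero_norm' (a := fun ε : ℝ => (|C| * 1) * |ε - 0|)
    · filter_upwards [self_mem_nhdsWithin] with ε (hε : (0:ℝ) < ε)
      apply intervalIntegral.norm_integral_le_of_norm_le_const
      intro w _
      rw [norm_mul]
      exact mul_le_mul_of_nonneg_left (hGbd w) (abs_nonneg C) |>.trans_eq (by ring) |>.trans_eq rfl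
    · have hcont : Continuous fun ε : ℝ => (|C| * 1) * |ε - 0| := by continuity
      have h0 := hcont.tendsto 0
      simp only [sub_zero, abs_zero, mul_zero] at h0
      simp only [sub_zero]
      exact h0.mono_left nhdsWithin_le_nhds
  have hInt : Tendsto (fun ε : ℝ => ∫ w in ε..σ, C * G w) (nhdsWithin 0 (Set.Ioi 0))
      (nhds (∫ w in (0:ℝ)..σ, C * G w)) := by
    have hsplit : ∀ ε : ℝ, (∫ w in ε..σ, C * G w) =
        (∫ w in (0:ℝ)..σ, C * G w) - ∫ w in (0:ℝ)..ε, C * G w := by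
      intro ε
      rw [← intervalIntegral.integral_add_adjacent_intervals
        ((hGint 0 ε).const_mul C) ((hGint ε σ).const_mul C)]
      ring
    have base := (tendsto_const_nhds
      (x := (∫ w in (0:ℝ)..σ, C * G w)) (f := nhdsWithin (0:ℝ) (Set.Ioi 0))).sub hsmall
    rw [sub_zero] at base
    exact base.congr (fun ε => (hsplit ε).symm)
  -- combine
  have hlhs : Tendsto (fun ε : ℝ => uBS ε τ x k + ∫ w in ε..σ, C * G w)
      (nhdsWithin 0 (Set.Ioi 0))
      (nhds (max (Real.exp x - Real.exp k) 0 + ∫ w in (0:ℝ)..σ, C * G w)) :=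
    (tendsto_uBS_zero hτ).add hInt
  have hrhs : Tendsto (fun ε : ℝ => uBS ε τ x k + ∫ w in ε..σ, C * G w)
      (nhdsWithin 0 (Set.Ioi 0)) (nhds (uBS σ τ x k)) := by
    rw [tendsto_congr' (by
      filter_upwards [Ioo_mem_nhdsGT_of_mem (Set.left_mem_Ico.mpr hσ)] with ε hε
      exact hFTC ε hε)]
    exact tendsto_const_nhds
  have : Set.Ioo (0:ℝ) σ ∈ nhdsWithin (0:ℝ) (Set.Ioi 0) :=
    Ioo_mem_nhdsGT_of_mem (Set.left_mem_Ico.mpr hσ)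
  have hne : (nhdsWithin (0:ℝ) (Set.Ioi 0)).NeBot := by infer_instance
  have hmain := tendsto_nhds_unique hrhs hlhs
  rw [hmain, intervalIntegral.integral_const_mul]
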